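/- Let A be an m×n real matrix with m > n > 1 and full column rank. Then the following are equivalent: (i) AᵀA is a diagonal matrix; (ii) for every y ∈ ℝ^m and every index i at which the vector z = (AᵀA)⁻¹((Aᵀy)∘²) attains its maximum value, the vector v ∈ ℝ^n defined by v_i = ((AᵀA)⁻¹Aᵀy)_i and v_j = 0 for j ≠ i satisfies ‖Av − y‖ ≤ ‖Ax − y‖ for every 1-sparse x ∈ ℝ^n. -/

import Mathlib

open Matrix

/-- The Euclidean norm of a vector in `Fin m → ℝ`. -/
noncomputable def euclNorm {m : ℕ} (v : Fin m → ℝ) : ℝ :=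
  Real.sqrt (∑ i, v i ^ 2)

/-- A vector is `k`-sparse if it has at most `k` nonzero entries. -/
def KSparse {n : ℕ} (k : ℕ) (x : Fin n → ℝ) : Prop :=
  ∃ T : Finset (Fin n), T.card ≤ k ∧ ∀ i ∉ T, x i = 0

lemma euclNorm_le_euclNorm {m : ℕ} {w u : Fin m → ℝ} (h : ∑ i, w i ^ 2 ≤ ∑ i, u i ^ 2) :
    euclNorm w ≤ euclNorm u := Real.sqrt_le_sqrt h

lemma sq_sum_le_of_euclNorm {m : ℕ} {w u : Fin m → ℝ} (h : euclNorm w ≤ euclNorm u) :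
    ∑ i, w i ^ 2 ≤ ∑ i, u i ^ 2 := by
  have hw : (0:ℝ) ≤ ∑ i, w i ^ 2 := Finset.sum_nonneg fun i _ => sq_nonneg _
  have hu : (0:ℝ) ≤ ∑ i, u i ^ 2 := Finset.sum_nonneg fun i _ => sq_nonneg _
  calc ∑ i, w i ^ 2 = Real.sqrt (∑ i, w i ^2) ^ 2 := (Real.sq_sqrt hw).symm
    _ ≤ Real.sqrt (∑ i, u i ^2) ^ 2 := by
        exact pow_le_pow_left₀ (Real.sqrt_nonneg _) h 2
    _ = ∑ i, u i ^ 2 := Real.sq_sqrt hu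

lemma expand_sq {m n : ℕ} (A : Matrix (Fin m) (Fin n) ℝ) (y : Fin m → ℝ) (j : Fin n) (t : ℝ) :
    ∑ l, (A.mulVec (fun k => if k = j then t else 0) - y) l ^ 2
      = (Aᵀ * A) j j * t ^ 2 - 2 * t * (Aᵀ.mulVec y j) + ∑ l, y l ^ 2 := by
  have hv : ∀ l, A.mulVec (fun k => if k = j then t else 0) l = A l j * t := by
    intro l
    simp [Matrix.mulVec, dotProduct, mul_ite, mul_zero]
  have h1 : ∀ l : Fin m, (A.mulVec (fun k => if k = j then t else 0) - y) l ^ 2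
      = (A l j * A l j) * t ^ 2 - 2 * t * (A l j * y l) + y l ^ 2 := by
    intro l; rw [Pi.sub_apply, hv l]; ring
  have hG : (Aᵀ * A) j j = ∑ l, A l j * A l j := by simp [Matrix.mul_apply]
  have hc : Aᵀ.mulVec y j = ∑ l, A l j * y l := by simp [Matrix.mulVec, dotProduct]
  simp only [h1, hG, hc]
  rw [Finset.sum_add_distrib, Finset.sum_sub_distrib, ← Finset.sum_mul, ← Finset.mul_sum]

lemma ksparse_one_form {n : ℕ} (hn : 0 < n) {x : Fin n → ℝ} (h : KSparse 1 x) :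
    ∃ j t, x = fun k => if k = j then t else 0 := by
  obtain ⟨T, hT, hx⟩ := h
  rcases T.eq_empty_or_nonempty with rfl | ⟨j, hj⟩
  · exact ⟨⟨0, hn⟩, 0, funext fun k => by simp [hx k (Finset.notMem_empty k)]⟩
  · refine ⟨j, x j, funext fun k => ?_⟩
    by_cases hk : k = j
    · simp [hk]
    · simp only [if_neg hk]
      refine hx k fun hkT => hk ?_
      exact Finset.card_le_one.mp hT k hkT j hj

theorem stmt_1 {m n : ℕ} (hmn : n < m) (hn : 1 < n)
    (A : Matrix (Fin m) (Fin n) ℝ) (hrank : A.rank = n) :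
    (Aᵀ * A).IsDiag ↔
      ∀ (y : Fin m → ℝ) (i : Fin n),
        (∀ j : Fin n,
            (Aᵀ * A)⁻¹.mulVec (fun l => (Aᵀ.mulVec y l) ^ 2) j ≤
              (Aᵀ * A)⁻¹.mulVec (fun l => (Aᵀ.mulVec y l) ^ 2) i) →
          ∀ x : Fin n → ℝ, KSparse 1 x →
            euclNorm (A.mulVec
                (fun j => if j = i then ((Aᵀ * A)⁻¹.mulVec (Aᵀ.mulVec y)) j else 0) - y) ≤
              euclNorm (A.mulVec x - y) := by
  classical
  have hnpos : 0 < n := lt_trans Nat.zero_lt_one hn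
  set G := Aᵀ * A with hGdef
  -- basic facts about G
  have hGrank : G.rank = n := by rw [hGdef, rank_transpose_mul_self, hrank]
  have hGunit : IsUnit G := by
    rw [← Matrix.mulVec_surjective_iff_isUnit]
    have htop : LinearMap.range G.mulVecLin = ⊤ := by
      apply Submodule.eq_top_of_finrank_eq
      rw [Module.finrank_fin_fun]
      exact hGrank
    intro v
    have hv : v ∈ LinearMap.range G.mulVecLin := htop ▸ Submodule.mem_top
    obtain ⟨w, hw⟩ := hv
    exact ⟨w, by simpa using hw⟩
  have hGdet : IsUnit G.det := (Matrix.isUnit_iff_isUnit_det G).mp hGunit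
  have hGB : G * G⁻¹ = 1 := Matrix.mul_nonsing_inv G hGdet
  have hGinj : Function.Injective G.mulVec := mulVec_injective_iff_isUnit.mpr hGunit
  have hGsymm : Gᵀ = G := by rw [hGdef, transpose_mul, transpose_transpose]
  have hpsd : G.PosSemidef := by
    have := posSemidef_conjTranspose_mul_self A
    rwa [conjTranspose_eq_transpose_of_trivial] at this
  have hquad_nonneg : ∀ w : Fin n → ℝ, 0 ≤ w ⬝ᵥ (G *ᵥ w) := fun w => by
    simpa [star_trivial] using hpsd.dotProduct_mulVec_nonneg w
  have hquad : ∀ w : Fin n → ℝ, w ⬝ᵥ (G *ᵥ w) = 0 → w = 0 := by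
    intro w hw
    have h0 : G *ᵥ w = 0 := (hpsd.dotProduct_mulVec_zero_iff w).mp (by simpa [star_trivial] using hw)
    exact hGinj (h0.trans (Matrix.mulVec_zero G).symm)
  have hGdiagpos : ∀ j, 0 < G j j := by
    intro j
    have h1 : (Pi.single j 1 : Fin n → ℝ) ⬝ᵥ (G *ᵥ Pi.single j 1) = G j j := by
      simp [Matrix.mulVec_single, single_dotProduct]
    have h0 : (Pi.single j (1:ℝ) : Fin n → ℝ) ≠ 0 := by
      intro h; have := congrFun h j; simp at this
    rcases (hquad_nonneg (Pi.single j 1)).lt_or_eq with h | h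
    · rwa [h1] at h
    · exact absurd (hquad _ h.symm) h0
  constructor
  · -- forward
    intro hd y i hmax x hx
    set c := Aᵀ.mulVec y with hcdef
    have hBdiag : G⁻¹ = Matrix.diagonal (fun j => (G j j)⁻¹) := by
      apply Matrix.inv_eq_right_inv
      ext p q
      rw [Matrix.mul_diagonal]
      by_cases hpq : p = q
      · subst hpq
        simp [Matrix.one_apply_eq, mul_inv_cancel₀ (hGdiagpos p).ne']
      · simp [hd hpq, Matrix.one_apply_ne hpq]
    have hz : ∀ j, G⁻¹.mulVec (fun l => c l ^ 2) j = (G j j)⁻¹ * c j ^ 2 := by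
      intro j; rw [hBdiag, Matrix.mulVec_diagonal]
    have hmax' : ∀ j, (G j j)⁻¹ * c j ^ 2 ≤ (G i i)⁻¹ * c i ^ 2 := by
      intro j; have := hmax j; rwa [hz, hz] at this
    obtain ⟨j, t, rfl⟩ := ksparse_one_form hnpos hx
    have hveq : (fun j => if j = i then (G⁻¹.mulVec c) j else 0)
        = fun k => if k = i then (G i i)⁻¹ * c i else 0 := by
      funext k
      by_cases hk : k = i
      · subst hk; simp only [if_pos rfl]
        rw [hBdiag, Matrix.mulVec_diagonal]
      · simp [hk]
    rw [hveq]
    apply euclNorm_le_euclNorm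
    rw [expand_sq, expand_sq]
    have hdi := hGdiagpos i
    have hdj := hGdiagpos j
    have e1 : G i i * ((G i i)⁻¹ * c i) ^ 2 - 2 * ((G i i)⁻¹ * c i) * c i
        = -((G i i)⁻¹ * c i ^ 2) := by
      field_simp
      ring
    have e2 : -((G j j)⁻¹ * c j ^ 2) ≤ G j j * t ^ 2 - 2 * t * c j := by
      have hs := sq_nonneg (t - (G j j)⁻¹ * c j)
      have e3 : G j j * (t - (G j j)⁻¹ * c j) ^ 2
          = G j j * t ^ 2 - 2 * t * c j + (G j j)⁻¹ * c j ^ 2 := by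
        field_simp
        ring
      nlinarith [mul_nonneg hdj.le hs]
    have := hmax' j
    linarith
  · -- reverse
    intro H p q hpq
    set ek : Fin n → ℝ := Pi.single q 1 with hek
    set w0 : Fin n → ℝ := G⁻¹ *ᵥ ek with hw0
    set y : Fin m → ℝ := A *ᵥ w0 with hy
    have hAty : Aᵀ *ᵥ y = ek := by
      rw [hy, Matrix.mulVec_mulVec, ← hGdef, hw0, Matrix.mulVec_mulVec, hGB, Matrix.one_mulVec]
    have hGw0 : G *ᵥ w0 = ek := by
      rw [hw0, Matrix.mulVec_mulVec, hGB, Matrix.one_mulVec]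
    have hsq : (fun l => (Aᵀ.mulVec y l) ^ 2) = ek := by
      funext l
      have := congrFun hAty l
      rw [show Aᵀ.mulVec y l = (Aᵀ *ᵥ y) l from rfl, this, hek]
      by_cases hl : l = q
      · subst hl; simp
      · simp [Pi.single_eq_of_ne hl]
    have hzvec : G⁻¹ *ᵥ ek = w0 := hw0.symm
    obtain ⟨i, -, hi⟩ := Finset.exists_max_image Finset.univ (fun j => w0 j)
      ⟨q, Finset.mem_univ q⟩
    have hmaxz : ∀ j, G⁻¹.mulVec (fun l => (Aᵀ.mulVec y l) ^ 2) j ≤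
        G⁻¹.mulVec (fun l => (Aᵀ.mulVec y l) ^ 2) i := by
      intro j
      rw [show G⁻¹.mulVec (fun l => (Aᵀ.mulVec y l) ^ 2) = G⁻¹ *ᵥ ek from by rw [hsq]]
      rw [hzvec]
      exact hi j (Finset.mem_univ j)
    have key := H y i hmaxz
    -- step: for all t, quadratic at w0 i is minimal
    have hstep : ∀ t : ℝ,
        G i i * (w0 i) ^ 2 - 2 * (w0 i) * (ek i) ≤ G i i * t ^ 2 - 2 * t * (ek i) := by
      intro t
      have hx1 : KSparse 1 (fun k => if k = i then t else 0) :=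
        ⟨{i}, by simp, fun l hl => if_neg (by simpa using hl)⟩
      have h2 := key _ hx1
      have hveq : (fun j => if j = i then (G⁻¹.mulVec (Aᵀ.mulVec y)) j else 0)
          = fun k => if k = i then w0 i else 0 := by
        funext k
        by_cases hk : k = i
        · subst hk; simp only [if_pos rfl]
          rw [show G⁻¹.mulVec (Aᵀ.mulVec y) = G⁻¹ *ᵥ (Aᵀ *ᵥ y) from rfl, hAty, hzvec]
        · simp [hk]
      rw [hveq] at h2
      have h3 := sq_sum_le_of_euclNorm h2
      rw [expand_sq, expand_sq, ← hGdef] at h3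
      have hcy : Aᵀ.mulVec y i = ek i := congrFun hAty i
      rw [hcy] at h3
      linarith
    have hw0i : w0 i = (G i i)⁻¹ * ek i := by
      by_contra hne
      have h3 := hstep ((G i i)⁻¹ * ek i)
      have hsq' : 0 < G i i * (w0 i - (G i i)⁻¹ * ek i) ^ 2 :=
        mul_pos (hGdiagpos i)
          (lt_of_le_of_ne (sq_nonneg _) (Ne.symm (pow_ne_zero 2 (sub_ne_zero.mpr hne))))
      have hid : G i i * (w0 i - (G i i)⁻¹ * ek i) ^ 2
          = (G i i * (w0 i) ^ 2 - 2 * (w0 i) * ek i)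
            - (G i i * ((G i i)⁻¹ * ek i) ^ 2 - 2 * ((G i i)⁻¹ * ek i) * ek i) := by
        field_simp [(hGdiagpos i).ne']
        ring
      linarith
    have hw0qpos : 0 < w0 q := by
      have hne : w0 ≠ 0 := by
        intro h
        have := congrFun hGw0 q
        rw [h, Matrix.mulVec_zero] at this
        simp [hek] at this
      have h1 : w0 ⬝ᵥ (G *ᵥ w0) = w0 q := by
        rw [hGw0, hek, dotProduct_single, mul_one]
      rcases (hquad_nonneg w0).lt_or_eq with h | h
      · rwa [h1] at h
      · exact absurd (hquad w0 h.symm) hne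
    have hiq : i = q := by
      by_contra hne
      have heki : ek i = 0 := by rw [hek]; exact Pi.single_eq_of_ne hne 1
      rw [heki, mul_zero] at hw0i
      have := hi q (Finset.mem_univ q)
      rw [hw0i] at this
      linarith
    subst hiq
    have hekq : ek i = 1 := by rw [hek]; exact Pi.single_eq_same i 1
    rw [hekq, mul_one] at hw0i
    -- now the equality case
    set w : Fin n → ℝ := w0 - (G i i)⁻¹ • ek with hwdef
    have hGw : G *ᵥ w = ek - (G i i)⁻¹ • (G *ᵥ ek) := by
      rw [hwdef, Matrix.mulVec_sub, Matrix.mulVec_smul, hGw0]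
    have hvm : ∀ v : Fin n → ℝ, w ⬝ᵥ (G *ᵥ v) = (G *ᵥ w) ⬝ᵥ v := by
      intro v
      rw [Matrix.dotProduct_mulVec]
      congr 1
      conv_lhs => rw [← hGsymm]
      rw [Matrix.vecMul_transpose]
    have hdot : w ⬝ᵥ (G *ᵥ w) = 0 := by
      have hwek : w ⬝ᵥ ek = 0 := by
        rw [hwdef, sub_dotProduct, hek, dotProduct_single, mul_one,
          smul_dotProduct, dotProduct_single]
        simp [← hek, hw0i, Pi.single_eq_same]
      have hwGek : w ⬝ᵥ (G *ᵥ ek) = 0 := by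
        rw [hvm, hGw, sub_dotProduct, smul_dotProduct]
        have h4 : (G *ᵥ ek) ⬝ᵥ ek = G i i := by
          rw [hek, Matrix.mulVec_single, dotProduct_single]
          simp
        have h5 : ek ⬝ᵥ ek = 1 := by
          rw [hek, dotProduct_single]
          simp [Pi.single_eq_same]
        rw [h4, h5, smul_eq_mul, inv_mul_cancel₀ (hGdiagpos i).ne']
        ring
      rw [hGw, dotProduct_sub, dotProduct_smul, hwek, smul_eq_mul]
      rw [show w ⬝ᵥ (G *ᵥ ek) = 0 from hwGek]
      ring
    have hwzero : w = 0 := hquad w hdot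
    have hw0ek : w0 = (G i i)⁻¹ • ek := by
      have := sub_eq_zero.mp (hwdef ▸ hwzero)
      exact this
    have h6 := congrFun hGw0 p
    rw [hw0ek, Matrix.mulVec_smul] at h6
    have h7 : (G *ᵥ ek) p = G p i := by
      simp [hek, Matrix.mulVec_single]
    rw [Pi.smul_apply, h7, smul_eq_mul] at h6
    have h8 : ek p = 0 := by rw [hek]; exact Pi.single_eq_of_ne hpq 1
    rw [h8] at h6
    have h9 := mul_eq_zero.mp h6
    rcases h9 with h9 | h9
    · exact absurd h9 (inv_ne_zero (hGdiagpos i).ne')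
    · exact h9
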